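/- arXiv:0907.1304 — 2 statements merged into one kernel-verified Lean document; each statement's English description precedes it below -/
import Mathlib

section
/- Let Ω ⊆ ℂⁿ be open with C² defining function ρ, let M ∈ ∂Ω, and suppose there exists Z ∈ ℂⁿ with ∑_j ∂ρ/∂z_j(M) Z_j = 0 and ∑_{j,k} ∂²ρ/∂z_j∂z̄_k(M) Z_j Z̄_k < 0 (i.e., M is a point of non-Levi-pseudoconvexity). Then there exists a complex affine subspace h of complex dimension two containing M such that the slice Ω_h ⊆ ℂ² is not Levi pseudoconvex at φ⁻¹(M): ρ∘φ is a local C² defining function for Ω_h near φ⁻¹(M), and its Levi form at φ⁻¹(M) is negative on some complex tangent vector. -/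
open Complex Metric
open scoped ComplexOrder

noncomputable section

/-- The Wirtinger derivative `∂f/∂z_j` of a complex-valued function on `ℂⁿ` at `p`. -/
def wDz {n : ℕ} (j : Fin n) (f : (Fin n → ℂ) → ℂ) (p : Fin n → ℂ) : ℂ :=
  (fderiv ℝ f p (Pi.single j 1) - Complex.I * fderiv ℝ f p (Pi.single j Complex.I)) / 2

/-- The conjugate Wirtinger derivative `∂f/∂z̄_j`. -/
def wDzBar {n : ℕ} (j : Fin n) (f : (Fin n → ℂ) → ℂ) (p : Fin n → ℂ) : ℂ :=
  (fderiv ℝ f p (Pi.single j 1) + Complex.I * fderiv ℝ f p (Pi.single j Complex.I)) / 2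

/-- The mixed second Wirtinger derivative `∂²ρ/∂z_j∂z̄_k` of a real-valued function. -/
def leviEntry {n : ℕ} (j k : Fin n) (ρ : (Fin n → ℂ) → ℝ) (p : Fin n → ℂ) : ℂ :=
  wDz j (fun z => wDzBar k (fun w => (ρ w : ℂ)) z) p

/-- The Levi form `∑_{j,k} ∂²ρ/∂z_j∂z̄_k(p) Z_j Z̄_k`. -/
def leviForm {n : ℕ} (ρ : (Fin n → ℂ) → ℝ) (p : Fin n → ℂ) (Z : Fin n → ℂ) : ℂ :=
  ∑ j, ∑ k, leviEntry j k ρ p * Z j * (starRingEnd ℂ) (Z k)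

/-- `∑_j ∂ρ/∂z_j(p) Z_j`; `Z` is a complex tangent vector at `p` iff this vanishes. -/
def tangentSum {n : ℕ} (ρ : (Fin n → ℂ) → ℝ) (p : Fin n → ℂ) (Z : Fin n → ℂ) : ℂ :=
  ∑ j, wDz j (fun w => (ρ w : ℂ)) p * Z j

/-- Pseudoconvexity via the Kontinuitätssatz: for every family of analytic discs in `U`
whose boundaries lie in a single compact subset of `U`, the discs themselves lie in a
single compact subset of `U`. -/
def Pseudoconvex {E : Type*} [NormedAddCommGroup E] [NormedSpace ℂ E] (U : Set E) : Prop :=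
  ∀ (A : Type) (d : A → ℂ → E),
    (∀ α, ContinuousOn (d α) (closedBall 0 1) ∧ DifferentiableOn ℂ (d α) (ball 0 1) ∧
      d α '' closedBall 0 1 ⊆ U) →
    ∀ K : Set E, IsCompact K → K ⊆ U → (∀ α, d α '' sphere 0 1 ⊆ K) →
    ∃ K', IsCompact K' ∧ K' ⊆ U ∧ ∀ α, d α '' closedBall 0 1 ⊆ K'

/-- The affine parametrization `φ(w) = a + w₁ b + w₂ c` of a 2-dimensional affine subspace. -/
def aff {n : ℕ} (a b c : Fin n → ℂ) : (Fin 2 → ℂ) → (Fin n → ℂ) :=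
  fun w => a + w 0 • b + w 1 • c

/-- `ρ` is a `C²` defining function for the open set `Ω`. -/
def IsDefiningFunction {n : ℕ} (ρ : (Fin n → ℂ) → ℝ) (Ω : Set (Fin n → ℂ)) : Prop :=
  ContDiff ℝ 2 ρ ∧ Ω = {z | ρ z < 0} ∧ frontier Ω = {z | ρ z = 0} ∧
    ∀ z ∈ frontier Ω, fderiv ℝ ρ z ≠ 0

/-- A real-valued quadratic polynomial: a real polynomial of total degree at most 2. -/
def IsQuadratic {E : Type*} [NormedAddCommGroup E] [NormedSpace ℝ E] (q : E → ℝ) : Prop :=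
  ∃ (B : E →L[ℝ] E →L[ℝ] ℝ) (L : E →L[ℝ] ℝ) (c₀ : ℝ), ∀ z, q z = B z z + L z + c₀

section Aux

private lemma key_ring (A B w : ℂ) :
    (A - Complex.I * B) / 2 * w + (A + Complex.I * B) / 2 * (starRingEnd ℂ) w
      = (w.re : ℂ) * A + (w.im : ℂ) * B := by
  have hw : w = (w.re : ℂ) + (w.im : ℂ) * Complex.I := (Complex.re_add_im w).symm
  have hc : (starRingEnd ℂ) w = (w.re : ℂ) - (w.im : ℂ) * Complex.I := by
    apply Complex.ext <;> simp
  rw [hc]; nth_rewrite 1 [hw]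
  linear_combination (-(w.im : ℂ) * B) * Complex.I_mul_I

private lemma fderiv_repr {n : ℕ} (f : (Fin n → ℂ) → ℂ) (p : Fin n → ℂ) (v : Fin n → ℂ) :
    fderiv ℝ f p v = ∑ m, (wDz m f p * v m + wDzBar m f p * (starRingEnd ℂ) (v m)) := by
  have hv : v = ∑ m, ((v m).re • (Pi.single m (1:ℂ) : Fin n → ℂ)
      + (v m).im • (Pi.single m Complex.I : Fin n → ℂ)) := by
    have h1 : ∀ m : Fin n, (v m).re • (Pi.single m (1:ℂ) : Fin n → ℂ)
        + (v m).im • (Pi.single m Complex.I : Fin n → ℂ) = Pi.single m (v m) := by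
      intro m; ext k
      by_cases h : k = m
      · subst h; simp [Complex.real_smul, Complex.re_add_im]
      · simp [Pi.single_eq_of_ne h]
    simp only [h1, Finset.univ_sum_single]
  conv_lhs => rw [hv]
  rw [map_sum]
  refine Finset.sum_congr rfl fun m _ => ?_
  rw [map_add, ContinuousLinearMap.map_smul, ContinuousLinearMap.map_smul]
  rw [wDz, wDzBar, Complex.real_smul, Complex.real_smul]
  exact (key_ring _ _ _).symm

private def Tmap {n : ℕ} (b c : Fin n → ℂ) : (Fin 2 → ℂ) →L[ℂ] (Fin n → ℂ) :=
  (ContinuousLinearMap.proj 0).smulRight b + (ContinuousLinearMap.proj 1).smulRight c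

private lemma Tmap_apply {n : ℕ} (b c : Fin n → ℂ) (e : Fin 2 → ℂ) :
    Tmap b c e = e 0 • b + e 1 • c := rfl

private lemma Tmap_single {n : ℕ} (b c : Fin n → ℂ) (j : Fin 2) (z : ℂ) :
    Tmap b c (Pi.single j z) = z • ![b, c] j := by
  fin_cases j <;> simp [Tmap_apply]

private lemma hasFDerivAt_aff {n : ℕ} (a b c : Fin n → ℂ) (μ : Fin 2 → ℂ) :
    HasFDerivAt (aff a b c) ((Tmap b c).restrictScalars ℝ) μ := by
  have h : aff a b c = fun w => a + ((Tmap b c).restrictScalars ℝ) w := by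
    funext w; simp [aff, Tmap_apply, add_assoc]
  rw [h]
  exact (((Tmap b c).restrictScalars ℝ).hasFDerivAt).const_add a

private lemma fderiv_comp_aff {n : ℕ} {E : Type*} [NormedAddCommGroup E] [NormedSpace ℝ E]
    {f : (Fin n → ℂ) → E} (a b c : Fin n → ℂ) (p : Fin 2 → ℂ)
    (hf : DifferentiableAt ℝ f (aff a b c p)) :
    fderiv ℝ (fun w => f (aff a b c w)) p
      = (fderiv ℝ f (aff a b c p)).comp ((Tmap b c).restrictScalars ℝ) :=
  (hf.hasFDerivAt.comp p (hasFDerivAt_aff a b c p)).fderiv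

private lemma key2 (D E u : ℂ) :
    (D * u + E * (starRingEnd ℂ) u
      - Complex.I * (D * (Complex.I * u) + E * ((starRingEnd ℂ) (Complex.I * u)))) / 2
    = D * u := by
  rw [map_mul, Complex.conj_I]
  linear_combination ((E * (starRingEnd ℂ) u - D * u) / 2) * Complex.I_mul_I

private lemma key2bar (D E u : ℂ) :
    (D * u + E * (starRingEnd ℂ) u
      + Complex.I * (D * (Complex.I * u) + E * ((starRingEnd ℂ) (Complex.I * u)))) / 2
    = E * (starRingEnd ℂ) u := by
  rw [map_mul, Complex.conj_I]
  linear_combination ((D * u - E * (starRingEnd ℂ) u) / 2) * Complex.I_mul_I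

private lemma wDz_comp {n : ℕ} {f : (Fin n → ℂ) → ℂ} (a b c : Fin n → ℂ) (p : Fin 2 → ℂ)
    (hf : DifferentiableAt ℝ f (aff a b c p)) (j : Fin 2) :
    wDz j (fun w => f (aff a b c w)) p = ∑ m, wDz m f (aff a b c p) * (![b, c] j) m := by
  rw [wDz, fderiv_comp_aff a b c p hf]
  simp only [ContinuousLinearMap.comp_apply, ContinuousLinearMap.coe_restrictScalars']
  rw [Tmap_single, Tmap_single, one_smul]
  rw [fderiv_repr, fderiv_repr]
  rw [Finset.mul_sum, ← Finset.sum_sub_distrib, Finset.sum_div]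
  refine Finset.sum_congr rfl fun m _ => ?_
  have h : (Complex.I • ![b, c] j) m = Complex.I * (![b, c] j m) := rfl
  rw [h]
  exact key2 _ _ _

private lemma wDzBar_comp {n : ℕ} {f : (Fin n → ℂ) → ℂ} (a b c : Fin n → ℂ) (p : Fin 2 → ℂ)
    (hf : DifferentiableAt ℝ f (aff a b c p)) (j : Fin 2) :
    wDzBar j (fun w => f (aff a b c w)) p
      = ∑ m, wDzBar m f (aff a b c p) * (starRingEnd ℂ) ((![b, c] j) m) := by
  rw [wDzBar, fderiv_comp_aff a b c p hf]
  simp only [ContinuousLinearMap.comp_apply, ContinuousLinearMap.coe_restrictScalars']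
  rw [Tmap_single, Tmap_single, one_smul]
  rw [fderiv_repr, fderiv_repr]
  rw [Finset.mul_sum, ← Finset.sum_add_distrib, Finset.sum_div]
  refine Finset.sum_congr rfl fun m _ => ?_
  have h : (Complex.I • ![b, c] j) m = Complex.I * (![b, c] j m) := rfl
  rw [h]
  exact key2bar _ _ _

private lemma wDz_sum_mul {n N : ℕ} {F : Fin N → (Fin n → ℂ) → ℂ} {q : Fin n → ℂ}
    (hF : ∀ l, DifferentiableAt ℝ (F l) q) (cs : Fin N → ℂ) (m : Fin n) :
    wDz m (fun x => ∑ l, F l x * cs l) q = ∑ l, wDz m (F l) q * cs l := by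
  have hd : fderiv ℝ (fun x => ∑ l, F l x * cs l) q
      = ∑ l, (cs l) • fderiv ℝ (F l) q := by
    rw [fderiv_fun_sum (fun l _ => (hF l).mul_const _)]
    exact Finset.sum_congr rfl fun l _ => fderiv_mul_const (hF l) _
  rw [wDz, hd]
  simp only [ContinuousLinearMap.sum_apply, ContinuousLinearMap.smul_apply, smul_eq_mul,
    Finset.mul_sum]
  rw [← Finset.sum_sub_distrib, Finset.sum_div]
  refine Finset.sum_congr rfl fun l _ => ?_
  rw [wDz]; ring

private lemma diff_wDzBar {n : ℕ} {g : (Fin n → ℂ) → ℂ} (hg : ContDiff ℝ 2 g) (l : Fin n) :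
    Differentiable ℝ (fun x => wDzBar l g x) := by
  have h1 : ContDiff ℝ 1 (fderiv ℝ g) := hg.fderiv_right (by norm_num)
  have h2 : Differentiable ℝ (fun x => fderiv ℝ g x) := h1.differentiable one_ne_zero
  have h3 : Differentiable ℝ (fun x => fderiv ℝ g x (Pi.single l 1)) :=
    h2.clm_apply (differentiable_const _)
  have h4 : Differentiable ℝ (fun x => fderiv ℝ g x (Pi.single l Complex.I)) :=
    h2.clm_apply (differentiable_const _)
  have h5 : Differentiable ℝ (fun x => fderiv ℝ g x (Pi.single l 1)
      + Complex.I * fderiv ℝ g x (Pi.single l Complex.I)) :=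
    h3.add ((differentiable_const Complex.I).mul h4)
  unfold wDzBar
  simp only [div_eq_mul_inv]
  exact h5.mul_const _

private lemma wDzBar_eq_conj {n : ℕ} {ρ : (Fin n → ℂ) → ℝ} {p : Fin n → ℂ}
    (hρ : DifferentiableAt ℝ ρ p) (m : Fin n) :
    wDzBar m (fun w => (ρ w : ℂ)) p = (starRingEnd ℂ) (wDz m (fun w => (ρ w : ℂ)) p) := by
  have h : fderiv ℝ (fun w => ((ρ w : ℝ) : ℂ)) p = Complex.ofRealCLM.comp (fderiv ℝ ρ p) :=
    (Complex.ofRealCLM.hasFDerivAt.comp p hρ.hasFDerivAt).fderiv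
  rw [wDz, wDzBar, h]
  simp only [ContinuousLinearMap.comp_apply, Complex.ofRealCLM_apply, map_div₀, map_sub, map_add,
    map_mul, Complex.conj_I, Complex.conj_ofReal, map_ofNat]
  ring

private lemma leviEntry_comp {n : ℕ} {ρ : (Fin n → ℂ) → ℝ} (hρ : ContDiff ℝ 2 ρ)
    (a b c : Fin n → ℂ) (p : Fin 2 → ℂ) (j k : Fin 2) :
    leviEntry j k (fun w => ρ (aff a b c w)) p
      = ∑ m, ∑ l, leviEntry m l ρ (aff a b c p) * (![b, c] j) m
          * (starRingEnd ℂ) ((![b, c] k) l) := by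
  have hρℂ : ContDiff ℝ 2 (fun w => (ρ w : ℂ)) :=
    Complex.ofRealCLM.contDiff.comp hρ
  have hdρℂ : Differentiable ℝ (fun w => (ρ w : ℂ)) := hρℂ.differentiable (by norm_num)
  set g : (Fin n → ℂ) → ℂ :=
    fun x => ∑ l, wDzBar l (fun w => (ρ w : ℂ)) x * (starRingEnd ℂ) ((![b, c] k) l)
    with hgdef
  have hgd : ∀ x, DifferentiableAt ℝ g x := fun x =>
    DifferentiableAt.fun_sum fun l _ => ((diff_wDzBar hρℂ l) x).mul_const _
  have hinner : (fun z => wDzBar k (fun w => ((ρ (aff a b c w) : ℝ) : ℂ)) z)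
      = fun z => g (aff a b c z) := by
    funext z
    rw [hgdef]
    exact wDzBar_comp a b c z (hdρℂ _) k
  have h1 : leviEntry j k (fun w => ρ (aff a b c w)) p = wDz j (fun z => g (aff a b c z)) p :=
    congrArg (fun f => wDz j f p) hinner
  rw [h1, wDz_comp a b c p (hgd _) j]
  refine Finset.sum_congr rfl fun m _ => ?_
  rw [hgdef, wDz_sum_mul (fun l => (diff_wDzBar hρℂ l) _) _ m, Finset.sum_mul]
  refine Finset.sum_congr rfl fun l _ => ?_
  simp only [leviEntry]
  ring

end Aux

/-- At a point of non-Levi-pseudoconvexity of a `C²` boundary, some 2-dimensional affine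
slice through the point fails to be Levi pseudoconvex at the corresponding point. -/
theorem slice_not_levi_pseudoconvex {n : ℕ} (Ω : Set (Fin n → ℂ)) (hΩ : IsOpen Ω)
    (ρ : (Fin n → ℂ) → ℝ) (hρ : IsDefiningFunction ρ Ω) (M : Fin n → ℂ)
    (hM : M ∈ frontier Ω) (Z : Fin n → ℂ) (hZ : tangentSum ρ M Z = 0)
    (hneg : leviForm ρ M Z < 0) :
    ∃ a b c : Fin n → ℂ, LinearIndependent ℂ ![b, c] ∧
      ∃ μ : Fin 2 → ℂ, aff a b c μ = M ∧
        (∃ U ∈ nhds μ, ∀ w ∈ U, w ∈ aff a b c ⁻¹' Ω ↔ ρ (aff a b c w) < 0) ∧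
        fderiv ℝ (fun v => ρ (aff a b c v)) μ ≠ 0 ∧
        ∃ ζ : Fin 2 → ℂ, tangentSum (fun w => ρ (aff a b c w)) μ ζ = 0 ∧
          leviForm (fun w => ρ (aff a b c w)) μ ζ < 0 := by
  obtain ⟨hρC2, hΩeq, hfront, hgrad⟩ := hρ
  have hρdiff : Differentiable ℝ ρ := hρC2.differentiable (by norm_num)
  have hρℂ : ContDiff ℝ 2 (fun w => (ρ w : ℂ)) := Complex.ofRealCLM.contDiff.comp hρC2
  have hdρℂ : Differentiable ℝ (fun w => (ρ w : ℂ)) := hρℂ.differentiable (by norm_num)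
  set D : Fin n → ℂ := fun m => wDz m (fun w => (ρ w : ℂ)) M with hDdef
  set b : Fin n → ℂ := fun m => (starRingEnd ℂ) (D m) with hbdef
  -- coercion of real derivative
  have hcoe : ∀ v, ((fderiv ℝ ρ M v : ℝ) : ℂ) = fderiv ℝ (fun w => (ρ w : ℂ)) M v := by
    intro v
    have h : fderiv ℝ (fun w => ((ρ w : ℝ) : ℂ)) M = Complex.ofRealCLM.comp (fderiv ℝ ρ M) :=
      (Complex.ofRealCLM.hasFDerivAt.comp M (hρdiff M).hasFDerivAt).fderiv
    rw [h]; rfl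
  -- some D m is nonzero
  have hDex : ∃ m, D m ≠ 0 := by
    by_contra h
    push_neg at h
    apply hgrad M hM
    ext v
    have h2 : fderiv ℝ (fun w => (ρ w : ℂ)) M v = 0 := by
      rw [fderiv_repr]
      refine Finset.sum_eq_zero fun m _ => ?_
      rw [wDzBar_eq_conj (hρdiff M) m]
      have := h m
      rw [hDdef] at this  -- D m = wDz m ...
      simp [this]
    have h3 := hcoe v
    rw [h2] at h3
    exact_mod_cast h3
  obtain ⟨m₀, hm₀⟩ := hDex
  -- value of gradient on b
  have hSum : ((fderiv ℝ ρ M b : ℝ) : ℂ) = ((∑ m, 2 * Complex.normSq (D m) : ℝ) : ℂ) := by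
    rw [hcoe, fderiv_repr]
    rw [Complex.ofReal_sum]
    refine Finset.sum_congr rfl fun m _ => ?_
    rw [wDzBar_eq_conj (hρdiff M) m]
    have hb : b m = (starRingEnd ℂ) (D m) := rfl
    have hD : wDz m (fun w => (ρ w : ℂ)) M = D m := rfl
    rw [hD, hb, Complex.conj_conj, Complex.mul_conj, mul_comm ((starRingEnd ℂ) (D m)) (D m),
      Complex.mul_conj]
    push_cast
    ring
  have hSpos : (0:ℝ) < ∑ m, 2 * Complex.normSq (D m) := by
    refine Finset.sum_pos' (fun m _ => mul_nonneg (by norm_num) (Complex.normSq_nonneg _))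
      ⟨m₀, Finset.mem_univ _, ?_⟩
    have := Complex.normSq_pos.mpr hm₀
    linarith
  have hSne : fderiv ℝ ρ M b ≠ 0 := by
    intro h
    rw [h] at hSum
    have : (∑ m, 2 * Complex.normSq (D m) : ℝ) = 0 := by exact_mod_cast hSum.symm
    exact hSpos.ne' this
  -- Z nonzero
  have hZne : Z ≠ 0 := by
    rintro rfl
    rw [show leviForm ρ M (0 : Fin n → ℂ) = 0 by
      simp [leviForm]] at hneg
    exact lt_irrefl 0 hneg
  have haff0 : aff M b Z 0 = M := by simp [aff]
  refine ⟨M, b, Z, ?_, 0, haff0, ⟨Set.univ, Filter.univ_mem, fun w _ => by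
    simp [Set.mem_preimage, hΩeq]⟩, ?_, Pi.single 1 1, ?_, ?_⟩
  · -- linear independence
    rw [LinearIndependent.pair_iff]
    intro s t hst
    have hsum : ∑ m, D m * (s • b + t • Z) m = 0 := by rw [hst]; simp
    have hexp : ∑ m, D m * (s • b + t • Z) m
        = s * (∑ m, D m * b m) + t * tangentSum ρ M Z := by
      rw [tangentSum, Finset.mul_sum, Finset.mul_sum, ← Finset.sum_add_distrib]
      refine Finset.sum_congr rfl fun m _ => ?_
      have : (s • b + t • Z) m = s * b m + t * Z m := rfl
      rw [this]
      have hD : wDz m (fun w => (ρ w : ℂ)) M = D m := rfl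
      rw [hD]; ring
    rw [hexp, hZ, mul_zero, add_zero] at hsum
    have hbsum : (∑ m, D m * b m) ≠ 0 := by
      have : ∑ m, D m * b m = ((∑ m, Complex.normSq (D m) : ℝ) : ℂ) := by
        rw [Complex.ofReal_sum]
        exact Finset.sum_congr rfl fun m _ => by
          rw [show b m = (starRingEnd ℂ) (D m) from rfl, Complex.mul_conj]
      rw [this]
      have hpos : (0:ℝ) < ∑ m, Complex.normSq (D m) :=
        Finset.sum_pos' (fun m _ => Complex.normSq_nonneg _)
          ⟨m₀, Finset.mem_univ _, Complex.normSq_pos.mpr hm₀⟩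
      exact_mod_cast hpos.ne'
    have hs : s = 0 := by
      rcases mul_eq_zero.mp hsum with h | h
      · exact h
      · exact absurd h hbsum
    refine ⟨hs, ?_⟩
    rw [hs, zero_smul, zero_add] at hst
    rcases smul_eq_zero.mp hst with h | h
    · exact h
    · exact absurd h hZne
  · -- nonvanishing gradient of the slice function
    intro hzero
    have hc : fderiv ℝ (fun v => ρ (aff M b Z v)) 0 (Pi.single 0 1) = fderiv ℝ ρ M b := by
      rw [fderiv_comp_aff M b Z 0 (hρdiff _)]
      rw [ContinuousLinearMap.comp_apply, ContinuousLinearMap.coe_restrictScalars',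
        Tmap_single, one_smul, haff0]
      rfl
    rw [hzero] at hc
    exact hSne (by simpa using hc.symm)
  · -- tangentSum of slice
    rw [tangentSum, Fin.sum_univ_two]
    simp only [Pi.single_eq_same, Pi.single_eq_of_ne (show (0:Fin 2) ≠ 1 by decide),
      mul_zero, mul_one, zero_add]
    rw [wDz_comp M b Z 0 (hdρℂ _) 1, haff0]
    have : (![b, Z] 1) = Z := rfl
    rw [this, ← tangentSum, hZ]
  · -- Levi form of slice
    have hLF : leviForm (fun w => ρ (aff M b Z w)) 0 (Pi.single 1 1) = leviForm ρ M Z := by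
      rw [leviForm, Fin.sum_univ_two, Fin.sum_univ_two, Fin.sum_univ_two]
      simp only [Pi.single_eq_same, Pi.single_eq_of_ne (show (0:Fin 2) ≠ 1 by decide),
        map_zero, map_one, mul_zero, zero_mul, mul_one, zero_add, add_zero]
      rw [leviEntry_comp hρC2 M b Z 0 1 1, haff0]
      rw [leviForm]
      refine Finset.sum_congr rfl fun m _ => ?_
      refine Finset.sum_congr rfl fun l _ => ?_
      rfl
    rw [hLF]
    exact hneg
end
end

section
/- Let q : ℂⁿ → ℝ be a real-valued quadratic polynomial with q(M) = 0 and ∇q(M) ≠ 0 at some point M, and suppose there exists Z ∈ ℂⁿ with ∑_j ∂q/∂z_j(M) Z_j = 0 and ∑_{j,k} ∂²q/∂z_j∂z̄_k(M) Z_j Z̄_k < 0. If Ω is an open set and U a neighborhood of M ∈ ∂Ω such that {z ∈ U : q(z) < 0} ⊆ Ω, then Ω is not pseudoconvex. -/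
open Complex Metric
open scoped ComplexOrder

noncomputable section

namespace HPrf

variable {n : ℕ}

abbrev EE (n : ℕ) := Fin n → ℂ

theorem quadFDeriv (B : EE n →L[ℝ] EE n →L[ℝ] ℝ) (L : EE n →L[ℝ] ℝ) (c₀ : ℝ) (z : EE n) :
    HasFDerivAt (fun z => B z z + L z + c₀) (B z + B.flip z + L) z := by
  have hb : HasFDerivAt (fun z : EE n => B z z) (B z + B.flip z) z := by
    have h1 := (B.hasFDerivAt (x := z)).clm_apply (hasFDerivAt_id z)
    exact h1.congr_fderiv (by ext w; simp)
  exact (hb.add (L.hasFDerivAt)).add_const c₀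

theorem quadFDerivC (B : EE n →L[ℝ] EE n →L[ℝ] ℝ) (L : EE n →L[ℝ] ℝ) (c₀ : ℝ) (z : EE n) :
    fderiv ℝ (fun w => ((B w w + L w + c₀ : ℝ) : ℂ)) z
      = Complex.ofRealCLM.comp (B z + B.flip z + L) :=
  (Complex.ofRealCLM.hasFDerivAt.comp z (quadFDeriv B L c₀ z)).fderiv

theorem wDz_quad (B : EE n →L[ℝ] EE n →L[ℝ] ℝ) (L : EE n →L[ℝ] ℝ) (c₀ : ℝ)
    (q : EE n → ℝ) (hB : ∀ z, q z = B z z + L z + c₀) (j : Fin n) (z : EE n) :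
    wDz j (fun w => (q w : ℂ)) z =
      ((↑(B z (Pi.single j 1) + B (Pi.single j 1) z + L (Pi.single j 1)) : ℂ)
       - Complex.I * ↑(B z (Pi.single j Complex.I) + B (Pi.single j Complex.I) z
          + L (Pi.single j Complex.I))) / 2 := by
  have hfun : (fun w => ((q w : ℝ) : ℂ)) = fun w => ((B w w + L w + c₀ : ℝ) : ℂ) := by
    funext w; rw [hB]
  rw [wDz, hfun, quadFDerivC]
  simp

theorem wDzBar_quad (B : EE n →L[ℝ] EE n →L[ℝ] ℝ) (L : EE n →L[ℝ] ℝ) (c₀ : ℝ)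
    (q : EE n → ℝ) (hB : ∀ z, q z = B z z + L z + c₀) (k : Fin n) (z : EE n) :
    wDzBar k (fun w => (q w : ℂ)) z =
      ((↑(B z (Pi.single k 1) + B (Pi.single k 1) z + L (Pi.single k 1)) : ℂ)
       + Complex.I * ↑(B z (Pi.single k Complex.I) + B (Pi.single k Complex.I) z
          + L (Pi.single k Complex.I))) / 2 := by
  have hfun : (fun w => ((q w : ℝ) : ℂ)) = fun w => ((B w w + L w + c₀ : ℝ) : ℂ) := by
    funext w; rw [hB]
  rw [wDzBar, hfun, quadFDerivC]
  simp

theorem leviEntry_quad (B : EE n →L[ℝ] EE n →L[ℝ] ℝ) (L : EE n →L[ℝ] ℝ) (c₀ : ℝ)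
    (q : EE n → ℝ) (hB : ∀ z, q z = B z z + L z + c₀) (j k : Fin n) (M : EE n) :
    leviEntry j k q M =
      ( (↑(B (Pi.single j 1) (Pi.single k 1) + B (Pi.single k 1) (Pi.single j 1)) : ℂ)
        + ↑(B (Pi.single j Complex.I) (Pi.single k Complex.I)
            + B (Pi.single k Complex.I) (Pi.single j Complex.I))
        + (↑(B (Pi.single j 1) (Pi.single k Complex.I)
            + B (Pi.single k Complex.I) (Pi.single j 1))
          - ↑(B (Pi.single j Complex.I) (Pi.single k 1)
            + B (Pi.single k 1) (Pi.single j Complex.I))) * Complex.I ) / 4 := by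
  set ek : EE n := Pi.single k 1
  set fk : EE n := Pi.single k Complex.I
  set T : EE n →L[ℝ] ℂ := (2⁻¹ : ℂ) • (Complex.ofRealCLM.comp (B.flip ek + B ek)
      + Complex.I • Complex.ofRealCLM.comp (B.flip fk + B fk)) with hT
  have hG : (fun z => wDzBar k (fun w => (q w : ℂ)) z)
      = fun z => ((↑(L ek) + Complex.I * ↑(L fk)) / 2 + T z) := by
    funext z
    rw [wDzBar_quad B L c₀ q hB k z]
    simp only [hT, ContinuousLinearMap.smul_apply, ContinuousLinearMap.add_apply,
      ContinuousLinearMap.comp_apply, ContinuousLinearMap.flip_apply, Complex.ofRealCLM_apply,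
      smul_eq_mul]
    push_cast
    ring
  have hfd : fderiv ℝ (fun z => wDzBar k (fun w => (q w : ℂ)) z) M = T := by
    rw [hG]
    exact ((T.hasFDerivAt (x := M)).const_add _).fderiv
  rw [leviEntry, wDz, hfd]
  simp only [hT, ContinuousLinearMap.smul_apply, ContinuousLinearMap.add_apply,
    ContinuousLinearMap.comp_apply, ContinuousLinearMap.flip_apply, Complex.ofRealCLM_apply,
    smul_eq_mul]
  push_cast
  ring_nf
  rw [Complex.I_sq]
  ring

theorem pi_decomp (w : EE n) :
    w = ∑ j, ((w j).re • (Pi.single j 1 : EE n) + (w j).im • (Pi.single j Complex.I : EE n)) := by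
  have h : ∀ j, (w j).re • (Pi.single j 1 : EE n) + (w j).im • (Pi.single j Complex.I : EE n)
      = Pi.single j (w j) := by
    intro j
    rw [← Pi.single_smul, ← Pi.single_smul, ← Pi.single_add]
    congr 1
    simp [Complex.real_smul]
  simp_rw [h]
  exact (Finset.univ_sum_single w).symm

theorem lin_rep (F : EE n →L[ℝ] ℝ) (w : EE n) :
    F w = (∑ j, ((↑(F (Pi.single j 1)) : ℂ)
      - Complex.I * ↑(F (Pi.single j Complex.I))) * w j).re := by
  conv_lhs => rw [pi_decomp w]
  rw [map_sum, Complex.re_sum]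
  refine Finset.sum_congr rfl fun j _ => ?_
  rw [map_add, map_smul, map_smul]
  simp [Complex.mul_re]
  ring

theorem Bexp (B : EE n →L[ℝ] EE n →L[ℝ] ℝ) (g h : Fin n → EE n) (u v s t : Fin n → ℝ) :
    B (∑ j, (u j • g j + v j • h j)) (∑ k, (s k • g k + t k • h k))
      = ∑ j, ∑ k, (u j * s k * B (g j) (g k) + u j * t k * B (g j) (h k)
        + v j * s k * B (h j) (g k) + v j * t k * B (h j) (h k)) := by
  rw [map_sum, Finset.sum_comm]
  refine Finset.sum_congr rfl fun j _ => ?_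
  rw [map_sum, ContinuousLinearMap.sum_apply]
  refine Finset.sum_congr rfl fun k _ => ?_
  simp only [map_add, map_smul, ContinuousLinearMap.add_apply, ContinuousLinearMap.smul_apply,
    smul_eq_mul]
  ring

theorem quad_slice (B : EE n →L[ℝ] EE n →L[ℝ] ℝ) (lam : ℂ) (Z : EE n) :
    B (lam • Z) (lam • Z) = lam.re^2 * B Z Z
      + lam.re * lam.im * (B Z (Complex.I • Z) + B (Complex.I • Z) Z)
      + lam.im^2 * B (Complex.I • Z) (Complex.I • Z) := by
  have h : lam • Z = lam.re • Z + lam.im • (Complex.I • Z) := by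
    conv_lhs => rw [← Complex.re_add_im lam]
    rw [add_smul, mul_smul]
    norm_num [Complex.coe_smul]
  rw [h]
  simp only [map_add, map_smul, ContinuousLinearMap.add_apply, ContinuousLinearMap.smul_apply,
    smul_eq_mul]
  ring

theorem leviForm_quad (B : EE n →L[ℝ] EE n →L[ℝ] ℝ) (L : EE n →L[ℝ] ℝ) (c₀ : ℝ)
    (q : EE n → ℝ) (hB : ∀ z, q z = B z z + L z + c₀) (M Z : EE n) :
    leviForm q M Z = ↑((B Z Z + B (Complex.I • Z) (Complex.I • Z)) / 2) := by
  classical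
  set e : Fin n → EE n := fun j => (Pi.single j 1 : EE n) with he
  set f : Fin n → EE n := fun j => (Pi.single j Complex.I : EE n) with hf
  set x : Fin n → ℝ := fun j => (Z j).re with hx
  set y : Fin n → ℝ := fun j => (Z j).im with hy
  set r : Fin n → Fin n → ℝ := fun j k =>
    ((x j * x k + y j * y k) * (B (e j) (e k) + B (f j) (f k))
      + (x j * y k - y j * x k) * (B (e j) (f k) - B (f j) (e k))) / 2 with hr
  have hZd : Z = ∑ j, (x j • e j + y j • f j) := pi_decomp Z
  have hZ'd : Complex.I • Z = ∑ j, ((-(y j)) • e j + x j • f j) := by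
    refine (pi_decomp (Complex.I • Z)).trans (Finset.sum_congr rfl fun j _ => ?_)
    simp [Complex.mul_re, Complex.mul_im, hx, hy, he, hf]
  have h1 : B Z Z = ∑ j, ∑ k, (x j * x k * B (e j) (e k) + x j * y k * B (e j) (f k)
      + y j * x k * B (f j) (e k) + y j * y k * B (f j) (f k)) := by
    conv_lhs => rw [hZd]
    exact Bexp B e f x y x y
  have h2 : B (Complex.I • Z) (Complex.I • Z)
      = ∑ j, ∑ k, ((-(y j)) * (-(y k)) * B (e j) (e k) + (-(y j)) * x k * B (e j) (f k)
      + x j * (-(y k)) * B (f j) (e k) + x j * x k * B (f j) (f k)) := by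
    conv_lhs => rw [hZ'd]
    exact Bexp B e f (fun j => -(y j)) x (fun j => -(y j)) x
  have hγ : (B Z Z + B (Complex.I • Z) (Complex.I • Z)) / 2 = ∑ j, ∑ k, r j k := by
    rw [h1, h2, ← Finset.sum_add_distrib, Finset.sum_div]
    refine Finset.sum_congr rfl fun j _ => ?_
    rw [← Finset.sum_add_distrib, Finset.sum_div]
    refine Finset.sum_congr rfl fun k _ => ?_
    rw [hr]; ring
  set Ter : Fin n → Fin n → ℂ := fun j k => leviEntry j k q M * Z j * (starRingEnd ℂ) (Z k)
    with hTer
  have key : ∀ j k, Ter j k + Ter k j = ↑(r j k + r k j) := by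
    intro j k
    rw [hTer]
    simp only
    rw [leviEntry_quad B L c₀ q hB j k M, leviEntry_quad B L c₀ q hB k j M]
    have hZj : Z j = ↑(x j) + ↑(y j) * Complex.I := (Complex.re_add_im (Z j)).symm
    have hZk : Z k = ↑(x k) + ↑(y k) * Complex.I := (Complex.re_add_im (Z k)).symm
    rw [hZj, hZk, hr]
    simp only [map_add, map_mul, Complex.conj_I, Complex.conj_ofReal, he, hf]
    push_cast
    ring_nf
    rw [Complex.I_sq]
    ring
  have hlf : leviForm q M Z = ∑ j, ∑ k, Ter j k := by rw [leviForm]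
  have hswap : leviForm q M Z = ∑ j, ∑ k, Ter k j := by
    rw [hlf]; exact Finset.sum_comm
  have h2lf : (2 : ℂ) * leviForm q M Z = ↑((2:ℝ) * ∑ j, ∑ k, r j k) := by
    rw [two_mul]
    nth_rewrite 1 [hlf]
    nth_rewrite 1 [hswap]
    rw [← Finset.sum_add_distrib]
    simp_rw [← Finset.sum_add_distrib, key]
    push_cast
    simp_rw [Finset.sum_add_distrib]
    rw [two_mul]
    congr 1
    exact Finset.sum_comm
  have hfin : leviForm q M Z = ↑(∑ j, ∑ k, r j k) := by
    apply mul_left_cancel₀ (two_ne_zero (α := ℂ))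
    rw [h2lf]; push_cast; ring
  rw [hfin, hγ]

theorem choice (c d x : ℝ) (hc : 0 ≤ c) (hd : 0 < d) (hx : x ≤ d / (2 * (c + 1))) :
    c * x ≤ d / 2 := by
  have h1 : c * x ≤ c * (d / (2 * (c + 1))) := mul_le_mul_of_nonneg_left hx hc
  have h2 : c * (d / (2 * (c + 1))) ≤ d / 2 := by
    rw [mul_div_assoc']
    rw [div_le_div_iff₀ (by positivity) (by norm_num : (0:ℝ) < 2)]
    linarith
  linarith

end HPrf

set_option maxHeartbeats 2000000 in
/-- Converse part of Hörmander's theorem: if a quadratic polynomial `q` supports `Ω` at a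
boundary point `M` and has negative Levi form on a complex tangent vector at `M`, then `Ω`
is not pseudoconvex. -/
theorem not_pseudoconvex_of_quadratic {n : ℕ} (q : (Fin n → ℂ) → ℝ) (hq : IsQuadratic q)
    (M : Fin n → ℂ) (hqM : q M = 0) (hgrad : fderiv ℝ q M ≠ 0) (Z : Fin n → ℂ)
    (hZ : tangentSum q M Z = 0) (hneg : leviForm q M Z < 0)
    (Ω : Set (Fin n → ℂ)) (hΩ : IsOpen Ω) (hM : M ∈ frontier Ω)
    (U : Set (Fin n → ℂ)) (hU : U ∈ nhds M) (hsub : {z ∈ U | q z < 0} ⊆ Ω) :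
    ¬ Pseudoconvex Ω := by
  intro hP
  classical
  obtain ⟨B, L, c₀, hB⟩ := hq
  set Dl : (Fin n → ℂ) →L[ℝ] ℝ := B M + B.flip M + L with hDl
  have hfq : fderiv ℝ q M = Dl := by
    have hqfun : q = fun z => B z z + L z + c₀ := funext hB
    rw [hqfun]
    exact (HPrf.quadFDeriv B L c₀ M).fderiv
  have hgrad' : Dl ≠ 0 := by rw [← hfq]; exact hgrad
  set a : Fin n → ℂ := fun j => ((↑(Dl (Pi.single j 1)) : ℂ)
      - Complex.I * ↑(Dl (Pi.single j Complex.I))) / 2 with ha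
  have hwdz : ∀ j, wDz j (fun w => ((q w : ℝ) : ℂ)) M = a j := by
    intro j
    rw [HPrf.wDz_quad B L c₀ q hB j M, ha]
    simp only [hDl, ContinuousLinearMap.add_apply, ContinuousLinearMap.flip_apply]
  have hrep : ∀ w, Dl w = (∑ j, 2 * a j * w j).re := by
    intro w
    rw [HPrf.lin_rep Dl w]
    congr 1
    refine Finset.sum_congr rfl fun j _ => ?_
    rw [ha]; ring
  have htan : ∑ j, a j * Z j = 0 := by
    rw [← hZ, tangentSum]
    exact (Finset.sum_congr rfl fun j _ => by rw [hwdz j]).symm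
  have hDlZ : ∀ lam : ℂ, Dl (lam • Z) = 0 := by
    intro lam
    rw [hrep]
    have h : ∑ j, 2 * a j * (lam • Z) j = 2 * lam * ∑ j, a j * Z j := by
      rw [Finset.mul_sum]
      refine Finset.sum_congr rfl fun j _ => ?_
      simp only [Pi.smul_apply, smul_eq_mul]
      ring
    rw [h, htan, mul_zero]
    simp
  have hex : ∃ v₀, Dl v₀ ≠ 0 := by
    by_contra h
    push_neg at h
    exact hgrad' (ContinuousLinearMap.ext fun w => by simp [h w])
  obtain ⟨v₀, hv₀⟩ := hex
  set v : Fin n → ℂ := (-1 / Dl v₀) • v₀ with hv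
  have hvDl : Dl v = -1 := by
    rw [hv, map_smul, smul_eq_mul]
    field_simp
  have hexj : ∃ j₀, a j₀ ≠ 0 := by
    by_contra h
    push_neg at h
    refine hgrad' (ContinuousLinearMap.ext fun w => ?_)
    rw [ContinuousLinearMap.zero_apply, hrep]
    simp [h]
  obtain ⟨j₀, hj₀⟩ := hexj
  have hγneg : (B Z Z + B (Complex.I • Z) (Complex.I • Z)) / 2 < 0 := by
    have h := HPrf.leviForm_quad B L c₀ q hB M Z
    rw [h] at hneg
    exact_mod_cast hneg
  set γ : ℝ := (B Z Z + B (Complex.I • Z) (Complex.I • Z)) / 2 with hγdef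
  set br : ℝ := (B Z Z - B (Complex.I • Z) (Complex.I • Z)) / 2 with hbr
  set bi : ℝ := -(B Z (Complex.I • Z) + B (Complex.I • Z) Z) / 2 with hbi
  set betaC : ℂ := ↑br + ↑bi * Complex.I with hbetaC
  set N : Fin n → ℂ := Pi.single j₀ (-betaC / 2 / a j₀) with hN
  have haN : ∑ j, a j * N j = -betaC / 2 := by
    rw [hN, Finset.sum_eq_single j₀]
    · rw [Pi.single_eq_same]
      field_simp
    · intro b _ hb
      simp [Pi.single_eq_of_ne hb]
    · simp
  have hDlN : ∀ μ : ℂ, Dl ((μ^2) • N) = -(betaC * μ^2).re := by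
    intro μ
    rw [hrep]
    have h : ∑ j, 2 * a j * ((μ^2 • N) : Fin n → ℂ) j = -(betaC * μ^2) := by
      have h2 : ∑ j, 2 * a j * ((μ^2 • N) : Fin n → ℂ) j = 2 * μ^2 * ∑ j, a j * N j := by
        rw [Finset.mul_sum]
        refine Finset.sum_congr rfl fun j _ => ?_
        simp only [Pi.smul_apply, smul_eq_mul]
        ring
      rw [h2, haN]; ring
    rw [h]; simp
  have hq0 : B M M + L M + c₀ = 0 := by rw [← hB M, hqM]
  have qexp : ∀ u, q (M + u) = Dl u + B u u := by
    intro u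
    rw [hB (M + u), hDl]
    simp only [map_add, ContinuousLinearMap.add_apply, ContinuousLinearMap.flip_apply]
    linarith [hq0]
  have hcancel : ∀ μ : ℂ, -(betaC * μ^2).re + B (μ • Z) (μ • Z) = γ * ‖μ‖^2 := by
    intro μ
    rw [HPrf.quad_slice B μ Z]
    have hnm : ‖μ‖^2 = μ.re^2 + μ.im^2 := by
      rw [Complex.sq_norm, Complex.normSq_apply]
      ring
    rw [hnm, hγdef, hbetaC, hbr, hbi]
    simp only [Complex.mul_re, Complex.add_re, Complex.add_im, Complex.mul_im,
      Complex.ofReal_re, Complex.ofReal_im, Complex.I_re, Complex.I_im, pow_two]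
    ring
  -- constants
  set CB : ℝ := ‖B‖ with hCB
  have hCB0 : 0 ≤ CB := norm_nonneg B
  set C₁ : ℝ := CB * (2 * ‖Z‖ * ‖N‖ + ‖N‖^2) with hC₁
  set C₂ : ℝ := 2 * CB * ‖v‖ * (‖Z‖ + ‖N‖) with hC₂
  set C₃ : ℝ := CB * ‖v‖^2 with hC₃
  have hC₁0 : 0 ≤ C₁ := by positivity
  have hC₂0 : 0 ≤ C₂ := by positivity
  have hC₃0 : 0 ≤ C₃ := by positivity
  clear_value Dl a v N betaC γ br bi CB C₁ C₂ C₃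
  obtain ⟨ε, hε, hball⟩ := Metric.nhds_basis_closedBall.mem_iff.mp hU
  set r : ℝ := min 1 (min (-γ / (2 * (C₁ + 1)))
      (min ((1/2) / (2 * (C₂ + 1))) (ε / (2 * (‖Z‖ + ‖N‖ + 1))))) with hrdef
  set t₁ : ℝ := min 1 (min ((1/2) / (2 * (C₃ + 1))) (ε / (2 * (‖v‖ + 1)))) with ht₁def
  have hrpos : 0 < r := by
    refine lt_min one_pos (lt_min (div_pos (by linarith) (by linarith))
      (lt_min (div_pos (by norm_num) (by linarith)) (by positivity)))
  have ht₁pos : 0 < t₁ :=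
    lt_min one_pos (lt_min (div_pos (by norm_num) (by linarith)) (by positivity))
  have hr1 : r ≤ 1 := min_le_left _ _
  have ht₁1 : t₁ ≤ 1 := min_le_left _ _
  have hrγ : C₁ * r ≤ -γ / 2 :=
    HPrf.choice C₁ (-γ) r hC₁0 (by linarith)
      (le_trans (min_le_right _ _) (min_le_left _ _))
  have hrC₂ : C₂ * r ≤ 1/4 := by
    have h := HPrf.choice C₂ (1/2) r hC₂0 (by norm_num)
      (le_trans (min_le_right _ _) (le_trans (min_le_right _ _) (min_le_left _ _)))
    linarith
  have hC₃t : C₃ * t₁ ≤ 1/4 := by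
    have h := HPrf.choice C₃ (1/2) t₁ hC₃0 (by norm_num)
      (le_trans (min_le_right _ _) (min_le_left _ _))
    linarith
  have hrU : (‖Z‖ + ‖N‖) * r ≤ ε / 2 :=
    HPrf.choice (‖Z‖ + ‖N‖) ε r (by positivity) hε
      (le_trans (min_le_right _ _) (le_trans (min_le_right _ _) (min_le_right _ _)))
  have ht₁U : ‖v‖ * t₁ ≤ ε / 2 :=
    HPrf.choice (‖v‖) ε t₁ (norm_nonneg v) hε
      (le_trans (min_le_right _ _) (min_le_right _ _))
  clear_value r t₁
  -- the key estimate
  have key : ∀ lam : ℂ, ‖lam‖ ≤ 1 → ∀ t : ℝ, 0 ≤ t → t ≤ t₁ →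
      q (M + (((r:ℂ) * lam) • Z + ((r:ℂ) * lam)^2 • N + t • v))
        ≤ γ/2 * ‖(r:ℂ) * lam‖^2 - t/2
      ∧ M + (((r:ℂ) * lam) • Z + ((r:ℂ) * lam)^2 • N + t • v) ∈ U := by
    intro lam hlam t ht ht₁'
    set μ : ℂ := (r:ℂ) * lam with hμdef
    set w₁ : Fin n → ℂ := μ • Z with hw₁def
    set w₂ : Fin n → ℂ := μ^2 • N with hw₂def
    set w₃ : Fin n → ℂ := t • v with hw₃def
    have hnμ : ‖μ‖ ≤ r := by
      rw [hμdef, norm_mul, Complex.norm_real, Real.norm_eq_abs, _root_.abs_of_pos hrpos]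
      linarith [mul_le_mul_of_nonneg_left hlam hrpos.le]
    have hnμ0 : 0 ≤ ‖μ‖ := norm_nonneg μ
    have hw₁n : ‖w₁‖ = ‖μ‖ * ‖Z‖ := norm_smul μ Z
    have hw₂n : ‖w₂‖ = ‖μ‖^2 * ‖N‖ := by rw [hw₂def, norm_smul, norm_pow]
    have hw₃n : ‖w₃‖ = t * ‖v‖ := by
      rw [hw₃def, norm_smul, Real.norm_eq_abs, _root_.abs_of_nonneg ht]
    clear_value μ w₁ w₂ w₃
    -- value expansion
    have hval : q (M + (w₁ + w₂ + w₃)) = γ * ‖μ‖^2 - t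
        + (B w₁ w₂ + B w₂ w₁ + B w₂ w₂)
        + (B w₁ w₃ + B w₃ w₁ + B w₂ w₃ + B w₃ w₂ + B w₃ w₃) := by
      rw [qexp]
      have hDu : Dl (w₁ + w₂ + w₃) = -(betaC * μ^2).re - t := by
        rw [map_add, map_add, hw₁def, hDlZ μ, hw₂def, hDlN μ, hw₃def, map_smul,
          smul_eq_mul, hvDl]
        ring
      have hBu : B (w₁ + w₂ + w₃) (w₁ + w₂ + w₃)
          = B w₁ w₁ + (B w₁ w₂ + B w₂ w₁ + B w₂ w₂)
            + (B w₁ w₃ + B w₃ w₁ + B w₂ w₃ + B w₃ w₂ + B w₃ w₃) := by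
        simp only [map_add, ContinuousLinearMap.add_apply]
        ring
      rw [hDu, hBu]
      have := hcancel μ
      rw [hw₁def]
      linarith [hcancel μ]
    -- bounds
    have hb12 : |B w₁ w₂| ≤ CB * (‖μ‖ * ‖Z‖) * (‖μ‖^2 * ‖N‖) := by
      have h := B.le_opNorm₂ w₁ w₂
      rwa [Real.norm_eq_abs, ← hCB, hw₁n, hw₂n] at h
    have hb21 : |B w₂ w₁| ≤ CB * (‖μ‖^2 * ‖N‖) * (‖μ‖ * ‖Z‖) := by
      have h := B.le_opNorm₂ w₂ w₁
      rwa [Real.norm_eq_abs, ← hCB, hw₁n, hw₂n] at h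
    have hb22 : |B w₂ w₂| ≤ CB * (‖μ‖^2 * ‖N‖) * (‖μ‖^2 * ‖N‖) := by
      have h := B.le_opNorm₂ w₂ w₂
      rwa [Real.norm_eq_abs, ← hCB, hw₂n] at h
    have hb13 : |B w₁ w₃| ≤ CB * (‖μ‖ * ‖Z‖) * (t * ‖v‖) := by
      have h := B.le_opNorm₂ w₁ w₃
      rwa [Real.norm_eq_abs, ← hCB, hw₁n, hw₃n] at h
    have hb31 : |B w₃ w₁| ≤ CB * (t * ‖v‖) * (‖μ‖ * ‖Z‖) := by
      have h := B.le_opNorm₂ w₃ w₁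
      rwa [Real.norm_eq_abs, ← hCB, hw₁n, hw₃n] at h
    have hb23 : |B w₂ w₃| ≤ CB * (‖μ‖^2 * ‖N‖) * (t * ‖v‖) := by
      have h := B.le_opNorm₂ w₂ w₃
      rwa [Real.norm_eq_abs, ← hCB, hw₂n, hw₃n] at h
    have hb32 : |B w₃ w₂| ≤ CB * (t * ‖v‖) * (‖μ‖^2 * ‖N‖) := by
      have h := B.le_opNorm₂ w₃ w₂
      rwa [Real.norm_eq_abs, ← hCB, hw₂n, hw₃n] at h
    have hb33 : |B w₃ w₃| ≤ CB * (t * ‖v‖) * (t * ‖v‖) := by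
      have h := B.le_opNorm₂ w₃ w₃
      rwa [Real.norm_eq_abs, ← hCB, hw₃n] at h
    have hμ3 : ‖μ‖^3 ≤ r * ‖μ‖^2 := by
      linarith [mul_le_mul_of_nonneg_left hnμ (sq_nonneg ‖μ‖)]
    have hμ4 : ‖μ‖^4 ≤ r * ‖μ‖^2 := by
      linarith [mul_le_mul hnμ hμ3 (by positivity) hrpos.le,
        mul_le_mul_of_nonneg_left hr1 (mul_nonneg hrpos.le (sq_nonneg ‖μ‖))]
    have hμ2r : ‖μ‖^2 ≤ r := by
      linarith [mul_le_mul hnμ hnμ hnμ0 hrpos.le,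
        mul_le_mul_of_nonneg_left hr1 hrpos.le]
    have hRestA : B w₁ w₂ + B w₂ w₁ + B w₂ w₂ ≤ C₁ * r * ‖μ‖^2 := by
      have c1 : (0:ℝ) ≤ CB * ‖Z‖ * ‖N‖ :=
        mul_nonneg (mul_nonneg hCB0 (norm_nonneg Z)) (norm_nonneg N)
      have c2 : (0:ℝ) ≤ CB * ‖N‖^2 := mul_nonneg hCB0 (sq_nonneg _)
      rw [hC₁]
      linarith [le_abs_self (B w₁ w₂), le_abs_self (B w₂ w₁), le_abs_self (B w₂ w₂),
        hb12, hb21, hb22, hC₁,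
        mul_le_mul_of_nonneg_left hμ3 c1, mul_le_mul_of_nonneg_left hμ4 c2]
    have hRestB : B w₁ w₃ + B w₃ w₁ + B w₂ w₃ + B w₃ w₂ + B w₃ w₃
        ≤ (C₂ * r + C₃ * t₁) * t := by
      have c3 : (0:ℝ) ≤ CB * ‖Z‖ * ‖v‖ * t :=
        mul_nonneg (mul_nonneg (mul_nonneg hCB0 (norm_nonneg Z)) (norm_nonneg v)) ht
      have c4 : (0:ℝ) ≤ CB * ‖N‖ * ‖v‖ * t :=
        mul_nonneg (mul_nonneg (mul_nonneg hCB0 (norm_nonneg N)) (norm_nonneg v)) ht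
      have c5 : (0:ℝ) ≤ CB * ‖v‖^2 * t :=
        mul_nonneg (mul_nonneg hCB0 (sq_nonneg _)) ht
      rw [hC₂, hC₃]
      linarith [le_abs_self (B w₁ w₃), le_abs_self (B w₃ w₁), le_abs_self (B w₂ w₃),
        le_abs_self (B w₃ w₂), le_abs_self (B w₃ w₃),
        hb13, hb31, hb23, hb32, hb33, hC₂, hC₃,
        mul_le_mul_of_nonneg_left hnμ c3, mul_le_mul_of_nonneg_left hμ2r c4,
        mul_le_mul_of_nonneg_left ht₁' c5]
    constructor
    · rw [hval]
      have e1 : C₁ * r * ‖μ‖^2 ≤ (-γ/2) * ‖μ‖^2 :=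
        mul_le_mul_of_nonneg_right hrγ (by positivity)
      have e2 : (C₂ * r + C₃ * t₁) * t ≤ (1/2) * t := by
        have : C₂ * r + C₃ * t₁ ≤ 1/2 := by linarith
        exact mul_le_mul_of_nonneg_right this ht
      linarith [hRestA, hRestB, e1, e2]
    · apply hball
      rw [Metric.mem_closedBall, dist_eq_norm, add_sub_cancel_left]
      have h1 : ‖w₁ + w₂ + w₃‖ ≤ ‖w₁‖ + ‖w₂‖ + ‖w₃‖ :=
        le_trans (norm_add_le _ _) (by linarith [norm_add_le w₁ w₂])
      have h2 : ‖w₁‖ ≤ r * ‖Z‖ := by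
        rw [hw₁n]; exact mul_le_mul_of_nonneg_right hnμ (norm_nonneg Z)
      have h3 : ‖w₂‖ ≤ r * ‖N‖ := by
        rw [hw₂n]; exact mul_le_mul_of_nonneg_right hμ2r (norm_nonneg N)
      have h4 : ‖w₃‖ ≤ t₁ * ‖v‖ := by
        rw [hw₃n]; exact mul_le_mul_of_nonneg_right ht₁' (norm_nonneg v)
      linarith [h1, h2, h3, h4, hrU, ht₁U]
  -- the family of discs
  set F : ℂ × ℝ → (Fin n → ℂ) :=
    fun p => M + (((r:ℂ) * p.1) • Z + ((r:ℂ) * p.1)^2 • N + p.2 • v) with hF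
  have hFcont : Continuous F := by fun_prop
  set d : ℕ → ℂ → (Fin n → ℂ) := fun k lam => F (lam, t₁ / (k + 1)) with hd
  have htk : ∀ k : ℕ, 0 < t₁ / ((k:ℝ) + 1) ∧ t₁ / ((k:ℝ) + 1) ≤ t₁ := by
    intro k
    constructor
    · positivity
    · apply div_le_self ht₁pos.le
      have : (0:ℝ) ≤ (k:ℝ) := Nat.cast_nonneg k
      linarith
  have hmemΩ : ∀ (lam : ℂ), ‖lam‖ ≤ 1 → ∀ t : ℝ, 0 < t → t ≤ t₁ → F (lam, t) ∈ Ω := by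
    intro lam hlam t ht ht'
    obtain ⟨hqle, hUmem⟩ := key lam hlam t ht.le ht'
    refine hsub ⟨hUmem, ?_⟩
    have hne : γ/2 * ‖(r:ℂ) * lam‖^2 ≤ 0 :=
      mul_nonpos_of_nonpos_of_nonneg (by linarith) (by positivity)
    linarith
  have hdiscs : ∀ k : ℕ, ContinuousOn (d k) (closedBall 0 1)
      ∧ DifferentiableOn ℂ (d k) (ball 0 1) ∧ d k '' closedBall 0 1 ⊆ Ω := by
    intro k
    refine ⟨(hFcont.comp (continuous_id.prodMk continuous_const)).continuousOn, ?_, ?_⟩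
    · have hdiff : Differentiable ℂ (d k) := by
        rw [hd, hF]
        simp only
        apply Differentiable.const_add
        apply Differentiable.add
        apply Differentiable.add
        · exact (differentiable_id.const_mul ((r:ℂ))).smul_const Z
        · exact ((differentiable_id.const_mul ((r:ℂ))).pow 2).smul_const N
        · exact differentiable_const _
      exact hdiff.differentiableOn
    · rintro _ ⟨lam, hlam, rfl⟩
      rw [Metric.mem_closedBall, dist_zero_right] at hlam
      exact hmemΩ lam hlam _ (htk k).1 (htk k).2
  set K : Set (Fin n → ℂ) := F '' (sphere 0 1 ×ˢ Set.Icc 0 t₁) with hK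
  have hKcomp : IsCompact K :=
    (((isCompact_sphere (0:ℂ) 1).prod isCompact_Icc)).image hFcont
  have hKΩ : K ⊆ Ω := by
    rintro _ ⟨⟨lam, t⟩, ⟨hlam, ht⟩, rfl⟩
    rw [mem_sphere_zero_iff_norm] at hlam
    obtain ⟨hqle, hUmem⟩ := key lam hlam.le t ht.1 ht.2
    refine hsub ⟨hUmem, ?_⟩
    have hnorm : ‖(r:ℂ) * lam‖ = r := by
      rw [norm_mul, Complex.norm_real, Real.norm_eq_abs, _root_.abs_of_pos hrpos, hlam, mul_one]
    rw [hnorm] at hqle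
    have hneg2 : γ/2 * r^2 < 0 :=
      mul_neg_of_neg_of_pos (by linarith) (by positivity)
    linarith [ht.1]
  have hbd : ∀ k : ℕ, d k '' sphere 0 1 ⊆ K := by
    rintro k _ ⟨lam, hlam, rfl⟩
    exact ⟨(lam, t₁ / (k + 1)), ⟨hlam, ⟨(htk k).1.le, (htk k).2⟩⟩, rfl⟩
  obtain ⟨K', hK'c, hK'Ω, hK'⟩ := hP ℕ d hdiscs K hKcomp hKΩ hbd
  have hmem : ∀ k : ℕ, d k 0 ∈ K' := by
    intro k
    refine hK' k ⟨0, ?_, rfl⟩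
    simp [Metric.mem_closedBall]
  have h0eq : ∀ k : ℕ, d k 0 = M + (t₁ / ((k:ℝ) + 1)) • v := by
    intro k
    rw [hd, hF]
    simp
  have htend : Filter.Tendsto (fun k : ℕ => d k 0) Filter.atTop (nhds M) := by
    simp_rw [h0eq]
    have h1 : Filter.Tendsto (fun k : ℕ => t₁ / ((k:ℝ) + 1)) Filter.atTop (nhds 0) := by
      have h2 := tendsto_one_div_add_atTop_nhds_zero_nat.const_mul t₁
      rw [mul_zero] at h2
      simpa [div_eq_mul_inv, mul_comm, mul_assoc] using h2
    have h3 := h1.smul_const v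
    rw [zero_smul] at h3
    simpa using h3.const_add M
  have hMK' : M ∈ K' := hK'c.isClosed.mem_of_tendsto htend (Filter.Eventually.of_forall hmem)
  have hMΩ : M ∈ Ω := hK'Ω hMK'
  rw [hΩ.frontier_eq] at hM
  exact hM.2 hMΩ
end
end
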